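/- Let m ≥ 2 be a deficient natural number with largest prime factor P, and suppose there exists a prime p > P such that m·p is abundant. Then for every s ≥ 1 there exist primes p₁ < p₂ < ⋯ < p_s with p₁ > P such that m·p₁⋯p_s is abundant and m·p₁⋯p_i is deficient for every i < s. Moreover, if m is squarefree, then m·p₁⋯p_s is primitive abundant. -/

import Mathlib

/-- The sum of all divisors of `n`. -/
def sigma1 (n : ℕ) : ℕ := ∑ d ∈ n.divisors, d

/-- `n` is abundant if `σ(n) > 2n`. -/
def Abundant (n : ℕ) : Prop := 2 * n < sigma1 n

/-- `n` is deficient if `σ(n) < 2n`. -/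
def Deficient (n : ℕ) : Prop := sigma1 n < 2 * n

/-- A primitive abundant number: abundant and all proper divisors deficient. -/
def PrimitiveAbundant (n : ℕ) : Prop :=
  Abundant n ∧ ∀ d ∈ n.properDivisors, Deficient d

lemma sigma1_eq_sigma (n : ℕ) : sigma1 n = ArithmeticFunction.sigma 1 n := by
  rw [ArithmeticFunction.sigma_one_apply]; rfl

lemma sigma1_mul_coprime {a b : ℕ} (h : Nat.Coprime a b) :
    sigma1 (a * b) = sigma1 a * sigma1 b := by
  simp only [sigma1_eq_sigma]
  exact ArithmeticFunction.isMultiplicative_sigma.map_mul_of_coprime h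

lemma sigma1_prime {q : ℕ} (hq : q.Prime) : sigma1 q = q + 1 := by
  unfold sigma1
  rw [hq.divisors, Finset.sum_insert (by simp [Ne.symm hq.ne_one])]
  simp [Nat.add_comm]

lemma sigma1_one : sigma1 1 = 1 := by simp [sigma1]

lemma sigma1_mul_prime {n q : ℕ} (hq : q.Prime) (hndvd : ¬ q ∣ n) :
    sigma1 (n * q) = sigma1 n * (q + 1) := by
  rw [sigma1_mul_coprime ((Nat.coprime_comm).1 (hq.coprime_iff_not_dvd.2 hndvd)),
    sigma1_prime hq]

lemma sigma1_dvd_le {d e : ℕ} (hde : d ∣ e) (he : 0 < e) :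
    sigma1 d * e ≤ sigma1 e * d := by
  obtain ⟨k, rfl⟩ := hde
  have hk : 0 < k := by
    rcases Nat.eq_zero_or_pos k with h | h
    · subst h; simp at he
    · exact h
  have key : sigma1 d * k ≤ sigma1 (d * k) := by
    calc sigma1 d * k = ∑ c ∈ d.divisors, c * k := by unfold sigma1; rw [Finset.sum_mul]
    _ = ∑ c ∈ d.divisors.image (· * k), c := by
        rw [Finset.sum_image]
        intro a _ b _ hab
        exact Nat.eq_of_mul_eq_mul_right hk hab
    _ ≤ sigma1 (d * k) := by
        apply Finset.sum_le_sum_of_subset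
        intro c hc
        simp only [Finset.mem_image] at hc
        obtain ⟨a, ha, rfl⟩ := hc
        rw [Nat.mem_divisors] at ha ⊢
        exact ⟨Nat.mul_dvd_mul_right ha.1 k, he.ne'⟩
  calc sigma1 d * (d * k) = sigma1 d * k * d := by ring
  _ ≤ sigma1 (d * k) * d := Nat.mul_le_mul_right d key

open Real

theorem my_real_main_inequality {x : ℝ} (x_large : (2048 : ℝ) ≤ x) :
    x * (2 * x) ^ (√(2 * x) + 2) * 4 ^ (2 * x / 3) ≤ 4 ^ x := by
  let f : ℝ → ℝ := fun x => log x + √(2 * x) * log (2 * x) + 2 * log (2 * x) - log 4 / 3 * x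
  have hf' : ∀ x, 0 < x → 0 < x * (2 * x) ^ (√(2 * x) + 2) / 4 ^ (x / 3) := fun x h =>
    div_pos (mul_pos h (rpow_pos_of_pos (mul_pos two_pos h) _)) (rpow_pos_of_pos four_pos _)
  have hf : ∀ x, 0 < x → f x = log (x * (2 * x) ^ (√(2 * x) + 2) / 4 ^ (x / 3)) := by
    intro x h5
    have h6 := mul_pos (zero_lt_two' ℝ) h5
    have h7 := rpow_pos_of_pos h6 (√(2 * x) + 2)
    rw [log_div (mul_pos h5 h7).ne' (rpow_pos_of_pos four_pos _).ne', log_mul h5.ne' h7.ne',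
      log_rpow h6, log_rpow zero_lt_four]
    simp only [f]
    ring
  have h5 : 0 < x := lt_of_lt_of_le (by norm_num1) x_large
  rw [← div_le_one (rpow_pos_of_pos four_pos x), ← div_div_eq_mul_div, ← rpow_sub four_pos, ←
    mul_div 2 x, mul_div_left_comm, ← mul_one_sub, (by norm_num1 : (1 : ℝ) - 2 / 3 = 1 / 3),
    mul_one_div, ← log_nonpos_iff (hf' x h5).le, ← hf x h5]
  have hlog2x : ConcaveOn ℝ (Set.Ioi (0.5 : ℝ)) (fun y : ℝ => log (2 * y)) := by
    have hc := strictConcaveOn_log_Ioi.concaveOn.comp_linearMap ((2 : ℝ) • LinearMap.id)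
    refine ConcaveOn.subset (ConcaveOn.congr hc ?_) (fun y hy => ?_) (convex_Ioi _)
    · intro y _
      simp [LinearMap.smul_apply]
    · simp only [Set.mem_preimage, LinearMap.smul_apply, LinearMap.id_coe, id_eq, smul_eq_mul,
        Set.mem_Ioi] at *
      linarith
  have h : ConcaveOn ℝ (Set.Ioi 0.5) f := by
    apply ConcaveOn.sub
    · apply ConcaveOn.add
      · apply ConcaveOn.add
        · exact strictConcaveOn_log_Ioi.concaveOn.subset
            (Set.Ioi_subset_Ioi (by norm_num)) (convex_Ioi 0.5)
        · convert ((strictConcaveOn_sqrt_mul_log_Ioi.concaveOn.comp_linearMap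
            ((2 : ℝ) • LinearMap.id))) using 1
          · rfl
          · rfl
          ext x
          simp only [Set.mem_Ioi, Set.mem_preimage, LinearMap.smul_apply,
            LinearMap.id_coe, id_eq, smul_eq_mul]
          rw [← mul_lt_mul_iff_right₀ (two_pos)]
          norm_num1
          rfl
          rfl
      · exact hlog2x.smul (by norm_num : (0:ℝ) ≤ 2)
    · apply ConvexOn.smul
      · refine div_nonneg (log_nonneg (by norm_num1)) (by norm_num1)
      · exact convexOn_id (convex_Ioi (0.5 : ℝ))
  suffices ∃ x1 x2, 0.5 < x1 ∧ x1 < x2 ∧ x2 ≤ x ∧ 0 ≤ f x1 ∧ f x2 ≤ 0 by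
    obtain ⟨x1, x2, h1, h2, h0, h3, h4⟩ := this
    exact (h.right_le_of_le_left'' h1 ((h1.trans h2).trans_le h0) h2 h0 (h4.trans h3)).trans h4
  refine ⟨18, 2048, by norm_num1, by norm_num1, x_large, ?_, ?_⟩
  · have hs : √(2 * 18 : ℝ) = 6 := (sqrt_eq_iff_mul_self_eq_of_pos (by norm_num1)).mpr (by norm_num1)
    rw [hf _ (by norm_num1), log_nonneg_iff (by positivity), hs,
      (by norm_num1 : (6 : ℝ) + 2 = 8), one_le_div (by norm_num1)]
    rw [show ((2:ℝ) * 18) = 36 by norm_num,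
      show ((18:ℝ)/3) = ((6:ℕ):ℝ) by norm_num,
      show ((8:ℝ)) = ((8:ℕ):ℝ) by norm_num, rpow_natCast, rpow_natCast]
    norm_num
  · have hs : √(2 * 2048) = 64 :=
      (sqrt_eq_iff_mul_self_eq_of_pos (by norm_num1)).mpr (by norm_num1)
    rw [hf _ (by norm_num1), log_nonpos_iff (hf' _ (by norm_num1)).le, hs,
        (by norm_num1 : (64 : ℝ) + 2 = 66), div_le_one (by positivity)]
    rw [show ((2:ℝ) * 2048) = 2^(12:ℕ) by norm_num,
      show ((66:ℝ)) = ((66:ℕ):ℝ) by norm_num, rpow_natCast, ← pow_mul,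
      show (12 * 66 : ℕ) = 792 by norm_num,
      show ((2048:ℝ)) = 2^(11:ℕ) by norm_num, ← pow_add,
      show (11 + 792 : ℕ) = 803 by norm_num,
      show ((4:ℝ)) = 2^((2:ℕ):ℝ) by rw [rpow_natCast]; norm_num,
      ← rpow_natCast 2 803, ← rpow_mul (by norm_num : (0:ℝ) ≤ 2)]
    apply rpow_le_rpow_of_exponent_le (by norm_num)
    norm_num

open Nat in
theorem my_main_inequality {n : ℕ} (n_large : 2048 ≤ n) :
    n * (2 * n) ^ (Nat.sqrt (2 * n) + 2) * 4 ^ (2 * n / 3) ≤ 4 ^ n := by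
  rw [← @Nat.cast_le ℝ]
  simp only [Nat.cast_add, Nat.cast_one, Nat.cast_mul, Nat.cast_ofNat, Nat.cast_pow, ← Real.rpow_natCast]
  refine _root_.trans ?_ (my_real_main_inequality (by exact_mod_cast n_large))
  gcongr
  · have n2_pos : 0 < 2 * n := by positivity
    exact mod_cast n2_pos
  · push_cast
    have := Real.nat_sqrt_le_real_sqrt (a := 2 * n)
    push_cast at this
    linarith
  · norm_num1
  · exact Nat.cast_div_le.trans (by norm_cast)

theorem three_primes_eventually (n : ℕ) (hn : 2048 ≤ n) :
    ∃ p₁ p₂ p₃ : ℕ, p₁.Prime ∧ p₂.Prime ∧ p₃.Prime ∧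
      n < p₁ ∧ p₁ < p₂ ∧ p₂ < p₃ ∧ p₃ ≤ 2 * n := by
  by_contra no_three
  have n_pos : 0 < n := by omega
  have n_big : 2 < n := by omega
  have n2_pos : 1 ≤ 2 * n := by omega
  set B := (Finset.range (2 * n + 1)).filter (fun p => p.Prime ∧ n < p) with hBdef
  have use3 : ∀ x y z : ℕ, x ∈ B → y ∈ B → z ∈ B → x < y → y < z → False := by
    intro x y z hx hy hz hxy hyz
    simp only [hBdef, Finset.mem_filter, Finset.mem_range] at hx hy hz
    exact no_three ⟨x, y, z, hx.2.1, hy.2.1, hz.2.1, hx.2.2, hxy, hyz, by omega⟩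
  have hcard : B.card ≤ 2 := by
    by_contra hc
    push_neg at hc
    obtain ⟨t, hts, htc⟩ := Finset.exists_subset_card_eq hc
    obtain ⟨a, b, c, hab, hac, hbc, rfl⟩ := Finset.card_eq_three.1 htc
    have haB : a ∈ B := hts (Finset.mem_insert_self _ _)
    have hbB : b ∈ B := hts (by simp)
    have hcB : c ∈ B := hts (by simp)
    rcases Nat.lt_trichotomy a b with h1 | h1 | h1
    · rcases Nat.lt_trichotomy b c with h2 | h2 | h2
      · exact use3 a b c haB hbB hcB h1 h2
      · exact hbc h2
      · rcases Nat.lt_trichotomy a c with h3 | h3 | h3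
        · exact use3 a c b haB hcB hbB h3 h2
        · exact hac h3
        · exact use3 c a b hcB haB hbB h3 h1
    · exact hab h1
    · rcases Nat.lt_trichotomy a c with h2 | h2 | h2
      · exact use3 b a c hbB haB hcB h1 h2
      · exact hac h2
      · rcases Nat.lt_trichotomy b c with h3 | h3 | h3
        · exact use3 b c a hbB hcB haB h3 h2
        · exact hbc h3
        · exact use3 c b a hcB hbB haB h3 h1
  -- decompose the central binomial coefficient
  set f : ℕ → ℕ := fun x => x ^ (Nat.centralBinom n).factorization x with hfdef
  have hdecomp : Nat.centralBinom n =
      (∏ p ∈ (Finset.range (2 * n + 1)).filter (fun x => x ≤ 2 * n / 3), f p) *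
      (∏ p ∈ (Finset.range (2 * n + 1)).filter (fun x => ¬ x ≤ 2 * n / 3), f p) := by
    rw [Finset.prod_filter_mul_prod_filter_not]
    exact (n.prod_pow_factorization_centralBinom).symm
  have hsmallrange : (Finset.range (2 * n + 1)).filter (fun x => x ≤ 2 * n / 3)
      = Finset.range (2 * n / 3 + 1) := by
    ext x
    simp only [Finset.mem_filter, Finset.mem_range]
    have := Nat.div_le_self (2 * n) 3
    omega
  have bound1 : (∏ p ∈ (Finset.range (2 * n + 1)).filter (fun x => x ≤ 2 * n / 3), f p)
      ≤ (2 * n) ^ Nat.sqrt (2 * n) * 4 ^ (2 * n / 3) := by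
    rw [hsmallrange]
    have hSprod : ∏ x ∈ (Finset.range (2 * n / 3 + 1)).filter Nat.Prime, f x
        = ∏ x ∈ Finset.range (2 * n / 3 + 1), f x := by
      refine Finset.prod_filter_of_ne fun p _ h => ?_
      contrapose! h
      dsimp only [f]
      rw [Nat.factorization_eq_zero_of_not_prime n.centralBinom h, _root_.pow_zero]
    rw [← hSprod, ← Finset.prod_filter_mul_prod_filter_not
      ((Finset.range (2 * n / 3 + 1)).filter Nat.Prime) (· ≤ Nat.sqrt (2 * n))]
    apply Nat.mul_le_mul
    · refine (Finset.prod_le_prod' fun p _ => (?_ : f p ≤ 2 * n)).trans ?_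
      · exact Nat.pow_factorization_choose_le (by omega)
      have hcards : (Finset.Icc 1 (Nat.sqrt (2 * n))).card = Nat.sqrt (2 * n) := by
        rw [Nat.card_Icc, Nat.add_sub_cancel]
      rw [Finset.prod_const]
      refine pow_right_mono₀ n2_pos ((Finset.card_le_card fun x hx => ?_).trans hcards.le)
      obtain ⟨h1, h2⟩ := Finset.mem_filter.1 hx
      exact Finset.mem_Icc.mpr ⟨(Finset.mem_filter.1 h1).2.one_lt.le, h2⟩
    · refine le_trans ?_ (primorial_le_4_pow (2 * n / 3))
      refine (Finset.prod_le_prod' fun p hp => (?_ : f p ≤ p)).trans ?_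
      · obtain ⟨h1, h2⟩ := Finset.mem_filter.1 hp
        refine (pow_right_mono₀ (Finset.mem_filter.1 h1).2.one_lt.le ?_).trans (pow_one p).le
        exact Nat.factorization_choose_le_one (Nat.sqrt_lt'.mp <| not_le.1 h2)
      refine Finset.prod_le_prod_of_subset_of_one_le' (Finset.filter_subset _ _) ?_
      exact fun p hp _ => (Finset.mem_filter.1 hp).2.one_lt.le
  have bound2 : (∏ p ∈ (Finset.range (2 * n + 1)).filter (fun x => ¬ x ≤ 2 * n / 3), f p)
      ≤ (2 * n) ^ 2 := by
    set T := (Finset.range (2 * n + 1)).filter (fun x => ¬ x ≤ 2 * n / 3) with hTdef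
    have hpoint : ∀ x ∈ T, f x ≤ (if x.Prime ∧ n < x then 2 * n else 1) := by
      intro x hx
      simp only [hTdef, Finset.mem_filter, Finset.mem_range, not_le] at hx
      obtain ⟨hxr, hxgt⟩ := hx
      by_cases hp : x.Prime ∧ n < x
      · rw [if_pos hp]
        exact Nat.pow_factorization_choose_le (by omega)
      · rw [if_neg hp]
        rcases Classical.em x.Prime with hxp | hxp
        · have hxn : x ≤ n := by
            rcases Classical.em (n < x) with h | h
            · exact absurd ⟨hxp, h⟩ hp
            · omega
          dsimp only [f]
          rw [Nat.factorization_centralBinom_of_two_mul_self_lt_three_mul n_big hxn (by omega),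
            _root_.pow_zero]
        · dsimp only [f]
          rw [Nat.factorization_eq_zero_of_not_prime n.centralBinom hxp, _root_.pow_zero]
    calc (∏ p ∈ T, f p) ≤ ∏ p ∈ T, (if p.Prime ∧ n < p then 2 * n else 1) :=
          Finset.prod_le_prod' hpoint
    _ = (∏ p ∈ T.filter (fun p => p.Prime ∧ n < p), 2 * n) *
        (∏ p ∈ T.filter (fun p => ¬ (p.Prime ∧ n < p)), 1) := Finset.prod_ite _ _
    _ = (2 * n) ^ (T.filter (fun p => p.Prime ∧ n < p)).card := by
        rw [Finset.prod_const, Finset.prod_const, one_pow, mul_one]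
    _ ≤ (2 * n) ^ 2 := by
        apply Nat.pow_le_pow_right (by omega)
        have hTB : T.filter (fun p => p.Prime ∧ n < p) = B := by
          ext x
          simp only [hTdef, hBdef, Finset.mem_filter, Finset.mem_range, not_le]
          constructor
          · rintro ⟨⟨h1, h2⟩, h3⟩
            exact ⟨h1, h3⟩
          · rintro ⟨h1, h2, h3⟩
            have : 2 * n / 3 < n := by omega
            exact ⟨⟨h1, by omega⟩, h2, h3⟩
        rw [hTB]
        exact hcard
  have hupper : Nat.centralBinom n
      ≤ (2 * n) ^ Nat.sqrt (2 * n) * 4 ^ (2 * n / 3) * (2 * n) ^ 2 := by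
    rw [hdecomp]
    exact Nat.mul_le_mul bound1 bound2
  have hlow := Nat.four_pow_lt_mul_centralBinom n (by omega)
  have hmain := my_main_inequality hn
  have hcombine : n * Nat.centralBinom n ≤ 4 ^ n := by
    calc n * Nat.centralBinom n
        ≤ n * ((2 * n) ^ Nat.sqrt (2 * n) * 4 ^ (2 * n / 3) * (2 * n) ^ 2) :=
          Nat.mul_le_mul_left n hupper
    _ = n * (2 * n) ^ (Nat.sqrt (2 * n) + 2) * 4 ^ (2 * n / 3) := by
        rw [pow_add]; ring
    _ ≤ 4 ^ n := hmain
  omega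

theorem gap_lemma (s D : ℕ) (hD : 0 < D) (h3 : 3 * D < s) :
    ∃ q q' : ℕ, q.Prime ∧ q'.Prime ∧ q < q' ∧ s < q * D ∧
      q * q' * D < s * (q + q' + 1) := by
  by_cases c0 : s < 5 * D
  · exact ⟨5, 7, by norm_num, by norm_num, by norm_num, c0, by omega⟩
  by_cases c1 : s < 7 * D
  · exact ⟨7, 11, by norm_num, by norm_num, by norm_num, c1, by omega⟩
  by_cases c2 : s < 11 * D
  · exact ⟨11, 13, by norm_num, by norm_num, by norm_num, c2, by omega⟩
  by_cases c3 : s < 13 * D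
  · exact ⟨13, 17, by norm_num, by norm_num, by norm_num, c3, by omega⟩
  by_cases c4 : s < 17 * D
  · exact ⟨17, 19, by norm_num, by norm_num, by norm_num, c4, by omega⟩
  by_cases c5 : s < 19 * D
  · exact ⟨19, 23, by norm_num, by norm_num, by norm_num, c5, by omega⟩
  by_cases c6 : s < 23 * D
  · exact ⟨23, 29, by norm_num, by norm_num, by norm_num, c6, by omega⟩
  by_cases c7 : s < 29 * D
  · exact ⟨29, 31, by norm_num, by norm_num, by norm_num, c7, by omega⟩
  by_cases c8 : s < 41 * D
  · exact ⟨41, 43, by norm_num, by norm_num, by norm_num, c8, by omega⟩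
  by_cases c9 : s < 59 * D
  · exact ⟨59, 61, by norm_num, by norm_num, by norm_num, c9, by omega⟩
  by_cases c10 : s < 71 * D
  · exact ⟨71, 73, by norm_num, by norm_num, by norm_num, c10, by omega⟩
  by_cases c11 : s < 101 * D
  · exact ⟨101, 103, by norm_num, by norm_num, by norm_num, c11, by omega⟩
  by_cases c12 : s < 137 * D
  · exact ⟨137, 139, by norm_num, by norm_num, by norm_num, c12, by omega⟩
  by_cases c13 : s < 197 * D
  · exact ⟨197, 199, by norm_num, by norm_num, by norm_num, c13, by omega⟩
  by_cases c14 : s < 269 * D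
  · exact ⟨269, 271, by norm_num, by norm_num, by norm_num, c14, by omega⟩
  by_cases c15 : s < 431 * D
  · exact ⟨431, 433, by norm_num, by norm_num, by norm_num, c15, by omega⟩
  by_cases c16 : s < 599 * D
  · exact ⟨599, 601, by norm_num, by norm_num, by norm_num, c16, by omega⟩
  by_cases c17 : s < 821 * D
  · exact ⟨821, 823, by norm_num, by norm_num, by norm_num, c17, by omega⟩
  by_cases c18 : s < 1031 * D
  · exact ⟨1031, 1033, by norm_num, by norm_num, by norm_num, c18, by omega⟩
  by_cases c19 : s < 1451 * D
  · exact ⟨1451, 1453, by norm_num, by norm_num, by norm_num, c19, by omega⟩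
  by_cases c20 : s < 2081 * D
  · exact ⟨2081, 2083, by norm_num, by norm_num, by norm_num, c20, by omega⟩
  -- large case
  push_neg at c20
  have ha1 : s / D * D ≤ s := Nat.div_mul_le_self s D
  have ha2 : s < (s / D + 1) * D := by
    calc s = D * (s / D) + s % D := (Nat.div_add_mod s D).symm
    _ < D * (s / D) + D := by have := Nat.mod_lt s hD; omega
    _ = (s / D + 1) * D := by ring
  have ha3 : 2081 ≤ s / D := (Nat.le_div_iff_mul_le hD).2 c20
  set a := s / D with ha
  obtain ⟨p₁, p₂, p₃, hp₁, hp₂, hp₃, h₁, h₂, h₃, h₄⟩ :=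
    three_primes_eventually (a + 1) (by omega)
  have ho₁ : p₁ % 2 = 1 := Nat.odd_iff.1 (hp₁.odd_of_ne_two (by omega))
  have ho₂ : p₂ % 2 = 1 := Nat.odd_iff.1 (hp₂.odd_of_ne_two (by omega))
  have ho₃ : p₃ % 2 = 1 := Nat.odd_iff.1 (hp₃.odd_of_ne_two (by omega))
  have e2 : p₂ + 2 ≤ 2 * a + 2 := by omega
  have e1 : p₁ + 4 ≤ 2 * a + 2 := by omega
  have e3 : a + 2 ≤ p₁ := by omega
  have e4 : a + 2 ≤ p₂ := by omega
  refine ⟨p₁, p₂, hp₁, hp₂, h₂, ?_, ?_⟩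
  · calc s < (a + 1) * D := ha2
    _ ≤ p₁ * D := Nat.mul_le_mul_right _ (by omega)
  · have key : p₁ * p₂ < a * (p₁ + p₂ + 1) := by
      zify at e1 e2 e3 e4 ⊢
      nlinarith [mul_nonneg (by linarith : (0:ℤ) ≤ 2 * a - p₂) (by linarith : (0:ℤ) ≤ p₁ - a)]
    calc p₁ * p₂ * D < a * (p₁ + p₂ + 1) * D := by
          exact (Nat.mul_lt_mul_right hD).2 key
    _ = a * D * (p₁ + p₂ + 1) := by ring
    _ ≤ s * (p₁ + p₂ + 1) := Nat.mul_le_mul_right _ ha1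

theorem chain : ∀ s : ℕ, 1 ≤ s → ∀ n w : ℕ, 2 ≤ n → Deficient n → w.Prime →
    (∀ r : ℕ, r.Prime → r ∣ n → r < w) → Abundant (n * w) →
    ∃ ps : Fin s → ℕ, (∀ i, (ps i).Prime) ∧ StrictMono ps ∧ (∀ i, w ≤ ps i) ∧
      Abundant (n * ∏ i, ps i) ∧
      (∀ i : ℕ, i < s →
        Deficient (n * ∏ j ∈ Finset.univ.filter (fun j : Fin s => (j : ℕ) < i), ps j)) := by
  intro s hs
  induction s, hs using Nat.le_induction with
  | base =>
    intro n w hn hdef hw hmax hab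
    refine ⟨fun _ => w, fun _ => hw, ?_, fun _ => le_refl w, ?_, ?_⟩
    · intro a b hab'
      simp [Subsingleton.elim a b] at hab'
    · simpa using hab
    · intro i hi
      interval_cases i
      have : (Finset.univ.filter (fun j : Fin 1 => (j : ℕ) < 0)) = ∅ := by simp
      rw [this, Finset.prod_empty, mul_one]
      exact hdef
  | succ s hs IH =>
    intro n w hn hdef hw hmax hab
    -- basic facts
    obtain ⟨r0, hr0p, hr0d⟩ := Nat.exists_prime_and_dvd (show n ≠ 1 by omega)
    have hw3 : 3 ≤ w := by
      have h1 := hmax r0 hr0p hr0d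
      have h2 := hr0p.two_le
      omega
    have hwn : ¬ w ∣ n := fun hd => lt_irrefl w (hmax w hw hd)
    have hdefn : sigma1 n < 2 * n := hdef
    set D := 2 * n - sigma1 n with hDdef
    have hD : 0 < D := by omega
    have hσD : sigma1 n + D = 2 * n := by omega
    have habw : 2 * n * w < sigma1 n * (w + 1) := by
      have := hab
      unfold Abundant at this
      rw [sigma1_mul_prime hw hwn] at this
      calc 2 * n * w = 2 * (n * w) := by ring
      _ < sigma1 n * (w + 1) := this
    have hwD : w * D < sigma1 n := by
      have e1 : (sigma1 n + D) * w = 2 * n * w := by rw [hσD]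
      nlinarith [habw]
    have h3D : 3 * D < sigma1 n := by
      have : 3 * D ≤ w * D := Nat.mul_le_mul_right D hw3
      omega
    obtain ⟨q, q', hq, hq', hqq', hσq, hpair⟩ := gap_lemma (sigma1 n) D hD h3D
    have hwq : w < q := by
      have : w * D < q * D := lt_trans hwD hσq
      exact Nat.lt_of_mul_lt_mul_right this
    have hqn : ¬ q ∣ n := fun hd => by have := hmax q hq hd; omega
    have h2nq : (sigma1 n + D) * q = 2 * n * q := by rw [hσD]
    have hdef' : Deficient (n * q) := by
      unfold Deficient
      rw [sigma1_mul_prime hq hqn]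
      calc sigma1 n * (q + 1) = sigma1 n * q + sigma1 n := by ring
      _ < sigma1 n * q + q * D := by omega
      _ = (sigma1 n + D) * q := by ring
      _ = 2 * n * q := h2nq
      _ = 2 * (n * q) := by ring
    have hmax' : ∀ r : ℕ, r.Prime → r ∣ n * q → r < q' := by
      intro r hr hd
      rcases (Nat.Prime.dvd_mul hr).1 hd with h | h
      · have := hmax r hr h; omega
      · have := (Nat.prime_dvd_prime_iff_eq hr hq).1 h; omega
    have hq'nq : ¬ q' ∣ n * q := fun hd => lt_irrefl q' (hmax' q' hq' hd)
    have hab' : Abundant (n * q * q') := by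
      unfold Abundant
      rw [sigma1_mul_prime hq' hq'nq, sigma1_mul_prime hq hqn]
      have e1 : (sigma1 n + D) * (q * q') = 2 * n * (q * q') := by rw [hσD]
      have e2 : sigma1 n * (q + 1) * (q' + 1)
          = sigma1 n * (q * q') + sigma1 n * (q + q' + 1) := by ring
      calc 2 * (n * q * q') = (sigma1 n + D) * (q * q') := by rw [e1]; ring
      _ = sigma1 n * (q * q') + q * q' * D := by ring
      _ < sigma1 n * (q * q') + sigma1 n * (q + q' + 1) := by omega
      _ = sigma1 n * (q + 1) * (q' + 1) := e2.symm
    have hn' : 2 ≤ n * q := le_trans hn (Nat.le_mul_of_pos_right n (by have := hq.two_le; omega))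
    obtain ⟨ps', hprime', hmono', hge', hab'', hdefi'⟩ := IH (n * q) q' hn' hdef' hq' hmax' hab'
    refine ⟨Fin.cons q ps', ?_, ?_, ?_, ?_, ?_⟩
    · intro i
      refine Fin.cases ?_ ?_ i
      · exact hq
      · intro j; rw [Fin.cons_succ]; exact hprime' j
    · intro a b hlt
      induction a using Fin.cases with
      | zero =>
        induction b using Fin.cases with
        | zero => exact absurd hlt (lt_irrefl _)
        | succ jb =>
          rw [Fin.cons_zero, Fin.cons_succ]
          have := hge' jb
          omega
      | succ ja =>
        induction b using Fin.cases with
        | zero => exact absurd hlt (by simp [Fin.lt_def])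
        | succ jb =>
          rw [Fin.cons_succ, Fin.cons_succ]
          exact hmono' (by rwa [Fin.succ_lt_succ_iff] at hlt)
    · intro i
      refine Fin.cases ?_ ?_ i
      · rw [Fin.cons_zero]; omega
      · intro j; rw [Fin.cons_succ]
        have := hge' j
        omega
    · rw [Fin.prod_cons, ← mul_assoc]
      exact hab''
    · intro i hi
      rcases Nat.eq_zero_or_pos i with rfl | hipos
      · have : (Finset.univ.filter (fun j : Fin (s + 1) => (j : ℕ) < 0)) = ∅ := by simp
        rw [this, Finset.prod_empty, mul_one]
        exact hdef
      · obtain ⟨i', rfl⟩ := Nat.exists_eq_add_of_le hipos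
        rw [Nat.add_comm 1 i'] at hi ⊢
        have hsplit : ∏ j ∈ Finset.univ.filter (fun j : Fin (s + 1) => (j : ℕ) < i' + 1),
            (Fin.cons q ps') j
            = q * ∏ j ∈ Finset.univ.filter (fun j : Fin s => (j : ℕ) < i'), ps' j := by
          rw [Finset.prod_filter, Finset.prod_filter, Fin.prod_univ_succ]
          simp [Fin.cons_succ, Fin.cons_zero, Nat.succ_lt_succ_iff]
        rw [hsplit, ← mul_assoc]
        exact hdefi' i' (by omega)

/-- If `m ≥ 2` is deficient with largest prime factor `P` and there is a prime
`p > P` with `m·p` abundant, then for every `s ≥ 1` there are primes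
`p₁ < ⋯ < p_s`, all larger than `P`, such that `m·p₁⋯p_s` is abundant,
every partial product `m·p₁⋯p_i` with `i < s` is deficient, and if `m` is
squarefree then `m·p₁⋯p_s` is primitive abundant. -/
theorem stmt15 (m P : ℕ) (hm : 2 ≤ m) (hdef : Deficient m)
    (hP : P.Prime) (hPdvd : P ∣ m) (hPmax : ∀ q : ℕ, q.Prime → q ∣ m → q ≤ P)
    (p : ℕ) (hp : p.Prime) (hpP : P < p) (hab : Abundant (m * p)) :
    ∀ s : ℕ, 1 ≤ s → ∃ ps : Fin s → ℕ,
      (∀ i, (ps i).Prime) ∧ StrictMono ps ∧ (∀ i, P < ps i) ∧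
      Abundant (m * ∏ i, ps i) ∧
      (∀ i : ℕ, i < s →
        Deficient (m * ∏ j ∈ Finset.univ.filter (fun j : Fin s => (j : ℕ) < i), ps j)) ∧
      (Squarefree m → PrimitiveAbundant (m * ∏ i, ps i)) := by
  intro s hs
  have hmax : ∀ r : ℕ, r.Prime → r ∣ m → r < p := fun r hr hd =>
    lt_of_le_of_lt (hPmax r hr hd) hpP
  obtain ⟨ps, hprime, hmono, hge, habN, hdefi⟩ := chain s hs m p hm hdef hp hmax hab
  have hgeP : ∀ i, P < ps i := fun i => lt_of_lt_of_le hpP (hge i)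
  refine ⟨ps, hprime, hmono, hgeP, habN, hdefi, ?_⟩
  intro hsq
  set N := m * ∏ i, ps i with hN
  have hpos : ∀ i, 0 < ps i := fun i => (hprime i).pos
  have hprodpos : 0 < ∏ i, ps i := Finset.prod_pos fun i _ => hpos i
  have hNpos : 0 < N := by positivity
  -- the largest chosen prime
  have hs0 : 0 < s := hs
  let last : Fin s := ⟨s - 1, by omega⟩
  set top := ps last with htopdef
  have htopprime : (top : ℕ).Prime := hprime last
  have htople : ∀ i, ps i ≤ top := by
    intro i
    exact hmono.monotone (by simp [Fin.le_def, last]; omega)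
  -- split N = M' * top
  set M' := m * ∏ j ∈ Finset.univ.filter (fun j : Fin s => (j : ℕ) < s - 1), ps j with hM'
  have hfilter : Finset.univ.filter (fun j : Fin s => (j : ℕ) < s - 1)
      = Finset.univ.erase last := by
    ext j
    simp only [Finset.mem_filter, Finset.mem_erase, Finset.mem_univ, and_true, true_and]
    constructor
    · intro hj hjlast
      rw [hjlast] at hj
      simp [last] at hj
    · intro hj
      have : (j : ℕ) ≠ s - 1 := fun h => hj (Fin.ext (by simp [last, h]))
      have := j.isLt
      omega
  have hNsplit : N = M' * top := by
    rw [hN, hM', hfilter, mul_assoc]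
    congr 1
    rw [mul_comm]
    exact (Finset.mul_prod_erase Finset.univ ps (Finset.mem_univ last)).symm
  have hM'def : Deficient M' := hdefi (s - 1) (by omega)
  have hM'pos : 0 < M' := by
    rw [hM']
    exact Nat.mul_pos (by omega) (Finset.prod_pos fun i _ => hpos i)
  -- squarefreeness of N
  have hndvd : ∀ i, ¬ ps i ∣ m := by
    intro i hdvd
    have := hPmax (ps i) (hprime i) hdvd
    have := hgeP i
    omega
  have hcop : Nat.Coprime m (∏ i, ps i) := by
    apply Nat.Coprime.prod_right
    intro i _
    exact Nat.coprime_comm.1 ((hprime i).coprime_iff_not_dvd.2 (hndvd i))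
  have hsqprod : ∀ t : Finset (Fin s), Squarefree (∏ i ∈ t, ps i) := by
    intro t
    induction t using Finset.induction with
    | empty => simpa using squarefree_one
    | @insert a t' hat ih =>
      rw [Finset.prod_insert hat]
      refine (Nat.squarefree_mul ?_).2 ⟨(hprime a).squarefree, ih⟩
      refine (hprime a).coprime_iff_not_dvd.2 ?_
      intro hdvd
      obtain ⟨b, hb, hdvd'⟩ := (Prime.dvd_finset_prod_iff (hprime a).prime _).1 hdvd
      have : ps a = ps b := ((Nat.prime_dvd_prime_iff_eq (hprime a) (hprime b)).1 hdvd')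
      have : a = b := hmono.injective this
      subst this
      exact hat hb
  have hsqN : Squarefree N := (Nat.squarefree_mul hcop).2 ⟨hsq, hsqprod Finset.univ⟩
  -- every N / r is deficient, for prime r dividing N
  have htopM' : ¬ top ∣ M' := by
    intro hdvd
    rcases (Nat.Prime.dvd_mul htopprime).1 hdvd with h | h
    · exact (hndvd last) h
    · obtain ⟨b, hb, hdvd'⟩ := (Prime.dvd_finset_prod_iff htopprime.prime _).1 h
      have : top = ps b := (Nat.prime_dvd_prime_iff_eq htopprime (hprime b)).1 hdvd'
      have hbl : b = last := hmono.injective this.symm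
      rw [hfilter] at hb
      rw [hbl] at hb
      exact (Finset.notMem_erase last Finset.univ) hb
  have hrle : ∀ r : ℕ, r.Prime → r ∣ N → r ≤ top := by
    intro r hr hrd
    rcases (Nat.Prime.dvd_mul hr).1 hrd with h | h
    · have := hPmax r hr h
      have := hgeP last
      omega
    · obtain ⟨b, _, hdvd'⟩ := (Prime.dvd_finset_prod_iff hr.prime _).1 h
      have : r = ps b := (Nat.prime_dvd_prime_iff_eq hr (hprime b)).1 hdvd'
      rw [this]
      exact htople b
  have hNr : ∀ r : ℕ, r.Prime → r ∣ N → Deficient (N / r) := by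
    intro r hr hrd
    by_cases hrt : r = top
    · subst hrt
      rw [hNsplit, Nat.mul_div_cancel _ hr.pos]
      exact hM'def
    · have hrM' : r ∣ M' := by
        rcases (Nat.Prime.dvd_mul hr).1 (hNsplit ▸ hrd) with h | h
        · exact h
        · exact absurd ((Nat.prime_dvd_prime_iff_eq hr htopprime).1 h) hrt
      obtain ⟨B, hB⟩ := hrM'
      rw [mul_comm] at hB
      have hBpos : 0 < B := by
        rcases Nat.eq_zero_or_pos B with h | h
        · rw [h] at hB; simp at hB; omega
        · exact h
      have hrB : ¬ r ∣ B := by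
        intro hdvd
        have : r * r ∣ N := by
          rw [hNsplit, hB]
          obtain ⟨c, hc⟩ := hdvd
          exact ⟨c * top, by rw [hc]; ring⟩
        exact hr.not_isUnit (hsqN r this)
      have htopB : ¬ top ∣ B := fun h => htopM' (hB ▸ h.mul_right r)
      have hNr_eq : N / r = B * top := by
        rw [hNsplit, hB]
        rw [show B * r * top = B * top * r by ring]
        exact Nat.mul_div_cancel _ hr.pos
      rw [hNr_eq]
      have hdefM' : sigma1 B * (r + 1) < 2 * (B * r) := by
        have := hM'def
        unfold Deficient at this
        rwa [hB, sigma1_mul_prime hr hrB] at this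
      have hrtop : r ≤ top := hrle r hr hrd
      unfold Deficient
      rw [sigma1_mul_prime htopprime htopB]
      have h1 : sigma1 B * (top + 1) * (r + 1) < 2 * (B * top) * (r + 1) := by
        calc sigma1 B * (top + 1) * (r + 1) = sigma1 B * (r + 1) * (top + 1) := by ring
        _ < 2 * (B * r) * (top + 1) := by
            exact (Nat.mul_lt_mul_right (by omega)).2 hdefM'
        _ ≤ 2 * (B * top) * (r + 1) := by nlinarith [hrtop, hBpos]
      exact Nat.lt_of_mul_lt_mul_right h1
  -- conclude
  refine ⟨habN, ?_⟩
  intro d hd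
  rw [Nat.mem_properDivisors] at hd
  obtain ⟨⟨k, hk⟩, hdlt⟩ := hd
  have hdpos : 0 < d := by
    rcases Nat.eq_zero_or_pos d with h | h
    · rw [h] at hk; simp at hk; omega
    · exact h
  have hk1 : k ≠ 1 := by
    intro h
    rw [h, mul_one] at hk
    omega
  have hk0 : k ≠ 0 := by
    intro h
    rw [h, mul_zero] at hk
    omega
  obtain ⟨r, hr, hrk⟩ := Nat.exists_prime_and_dvd hk1
  have hrN : r ∣ N := hk ▸ (hrk.mul_left d)
  have hrd : ¬ r ∣ d := by
    intro hdvd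
    have : r * r ∣ N := by
      obtain ⟨c1, hc1⟩ := hdvd
      obtain ⟨c2, hc2⟩ := hrk
      exact ⟨c1 * c2, by rw [hk, hc1, hc2]; ring⟩
    exact hr.not_isUnit (hsqN r this)
  obtain ⟨k', hk'⟩ := hrk
  have hdNr : d ∣ N / r := by
    have : N / r = d * k' := by
      rw [hk, hk', show d * (r * k') = d * k' * r by ring]
      exact Nat.mul_div_cancel _ hr.pos
    rw [this]
    exact ⟨k', rfl⟩
  have hNrpos : 0 < N / r := Nat.div_pos (Nat.le_of_dvd hNpos hrN) hr.pos
  have hmono1 := sigma1_dvd_le hdNr hNrpos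
  have hdefNr := hNr r hr hrN
  unfold Deficient at hdefNr ⊢
  have h2 : sigma1 d * (N / r) < 2 * d * (N / r) := by
    calc sigma1 d * (N / r) ≤ sigma1 (N / r) * d := hmono1
    _ < 2 * (N / r) * d := (Nat.mul_lt_mul_right hdpos).2 hdefNr
    _ = 2 * d * (N / r) := by ring
  exact Nat.lt_of_mul_lt_mul_right h2
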